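/- Let A be a C*-algebra and let f, w ∈ A with f self-adjoint (f* = f). Then ‖fw − wf‖² ≤ ‖w* f² w − f² w* w‖ + 2·‖f‖·‖w* f w − f w* w‖. -/
import Mathlib


/-- In a C*-algebra, for `f` self-adjoint and any `w`,
`‖fw − wf‖² ≤ ‖w* f² w − f² w* w‖ + 2·‖f‖·‖w* f w − f w* w‖`. -/
theorem norm_commutator_sq_le {A : Type*} [NonUnitalCStarAlgebra A]
    (f w : A) (hf : star f = f) :
    ‖f * w - w * f‖ ^ 2 ≤
      ‖star w * (f * f) * w - (f * f) * (star w * w)‖ +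
        2 * ‖f‖ * ‖star w * f * w - f * (star w * w)‖ := by
  set c := f * w - w * f with hc
  set D := star w * (f * f) * w - (f * f) * (star w * w) with hD
  set E := star w * f * w - f * (star w * w) with hE
  have key : star c * c = D - f * E - E * f := by
    simp only [hc, hD, hE, star_sub, star_mul, hf]
    noncomm_ring
  have h1 : ‖c‖ ^ 2 = ‖star c * c‖ := by
    rw [CStarRing.norm_star_mul_self, sq]
  rw [h1, key]
  calc ‖D - f * E - E * f‖ ≤ ‖D - f * E‖ + ‖E * f‖ := norm_sub_le _ _
    _ ≤ ‖D‖ + ‖f * E‖ + ‖E * f‖ := by gcongr; exact norm_sub_le _ _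
    _ ≤ ‖D‖ + ‖f‖ * ‖E‖ + ‖E‖ * ‖f‖ := by gcongr <;> exact norm_mul_le _ _
    _ = ‖D‖ + 2 * ‖f‖ * ‖E‖ := by ring
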